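/- Let A ∈ ℝ^{p×n}, b ∈ ℝ^p, E ∈ ℝ^{q×n} and F ∈ ℝ^q, with all vector and matrix inequalities understood entrywise. Suppose the set {x ∈ ℝ^n : A x ≤ b} is nonempty. Then the following are equivalent: (i) E x ≤ F holds for every x ∈ ℝ^n satisfying A x ≤ b; (ii) there exists a matrix P ∈ ℝ^{q×p} with all entries nonnegative such that P A = E and P b ≤ F. -/

import Mathlib

open Matrix Finset

/-- Homogeneous Farkas, separation form, by induction on the number of generators. -/
lemma farkas_aux : ∀ (p : ℕ) {m : Type} [Fintype m] (a : Fin p → (m → ℝ)) (c : m → ℝ),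
    (¬ ∃ y : Fin p → ℝ, (∀ i, 0 ≤ y i) ∧ ∑ i, y i • a i = c) →
    ∃ x : m → ℝ, (∀ i, a i ⬝ᵥ x ≤ 0) ∧ 0 < c ⬝ᵥ x := by
  intro p
  induction p with
  | zero =>
    intro m _ a c h
    refine ⟨c, fun i => i.elim0, ?_⟩
    have hc : c ≠ 0 := by
      rintro rfl
      exact h ⟨0, fun i => le_rfl, by simp⟩
    have h0 : c ⬝ᵥ c ≠ 0 := fun hz => hc ((dotProduct_self_eq_zero).1 hz)
    have h1 : 0 ≤ c ⬝ᵥ c := Finset.sum_nonneg fun i _ => mul_self_nonneg _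
    exact lt_of_le_of_ne h1 (Ne.symm h0)
  | succ p ih =>
    intro m _ a c h
    set a' : Fin p → m → ℝ := fun i => a i.castSucc with ha'
    set α := a (Fin.last p) with hα
    have h' : ¬ ∃ y : Fin p → ℝ, (∀ i, 0 ≤ y i) ∧ ∑ i, y i • a' i = c := by
      rintro ⟨y, hy, hsum⟩
      refine h ⟨Fin.snoc y 0, ?_, ?_⟩
      · intro i
        induction i using Fin.lastCases with
        | last => simp
        | cast i => simpa using hy i
      · rw [Fin.sum_univ_castSucc]
        simpa using hsum
    obtain ⟨x, hx, hcx⟩ := ih a' c h'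
    by_cases hαx : α ⬝ᵥ x ≤ 0
    · refine ⟨x, ?_, hcx⟩
      intro i
      induction i using Fin.lastCases with
      | last => exact hαx
      | cast i => exact hx i
    push_neg at hαx
    set t := α ⬝ᵥ x with ht
    have htne : t ≠ 0 := ne_of_gt hαx
    set P : (m → ℝ) → (m → ℝ) := fun v => v - ((v ⬝ᵥ x) / t) • α with hP
    have h'' : ¬ ∃ y : Fin p → ℝ, (∀ i, 0 ≤ y i) ∧ ∑ i, y i • P (a' i) = P c := by
      rintro ⟨y, hy, hsum⟩
      set μ := (c ⬝ᵥ x - ∑ i, y i * (a' i ⬝ᵥ x)) / t with hμdef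
      have hμ : 0 ≤ μ := by
        apply div_nonneg _ hαx.le
        have : ∑ i, y i * (a' i ⬝ᵥ x) ≤ 0 :=
          Finset.sum_nonpos fun i _ => mul_nonpos_of_nonneg_of_nonpos (hy i) (hx i)
        linarith
      apply h
      refine ⟨Fin.snoc y μ, ?_, ?_⟩
      · intro i
        induction i using Fin.lastCases with
        | last => simpa using hμ
        | cast i => simpa using hy i
      · rw [Fin.sum_univ_castSucc]
        simp only [Fin.snoc_castSucc, Fin.snoc_last]
        show (∑ i, y i • a' i) + μ • α = c
        have expand : ∑ i, y i • P (a' i)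
            = (∑ i, y i • a' i) - (∑ i, y i * ((a' i ⬝ᵥ x) / t)) • α := by
          rw [Finset.sum_smul, ← Finset.sum_sub_distrib]
          refine Finset.sum_congr rfl fun i _ => ?_
          funext k
          simp only [hP, smul_sub, smul_smul, Pi.sub_apply, Pi.smul_apply, smul_eq_mul]
          ring
        have hPc : P c = c - (c ⬝ᵥ x / t) • α := by simp [hP]
        rw [expand, hPc] at hsum
        have hS : (∑ i, y i • a' i)
            = c - (c ⬝ᵥ x / t) • α + (∑ i, y i * ((a' i ⬝ᵥ x) / t)) • α := by
          rw [← hsum]; abel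
        have hscal : μ = c ⬝ᵥ x / t - ∑ i, y i * ((a' i ⬝ᵥ x) / t) := by
          have hd : ∑ i, y i * ((a' i ⬝ᵥ x) / t) = (∑ i, y i * (a' i ⬝ᵥ x)) / t := by
            rw [Finset.sum_div]
            exact Finset.sum_congr rfl fun i _ => by ring
          rw [hμdef, hd]
          ring
        rw [hS, hscal, sub_smul]
        abel
    obtain ⟨z, hz, hcz⟩ := ih (fun i => P (a' i)) (P c) h''
    set w := z - ((α ⬝ᵥ z) / t) • x with hw
    have hswap : ∀ v : m → ℝ, v ⬝ᵥ w = P v ⬝ᵥ z := by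
      intro v
      simp only [hw, hP, dotProduct_sub, sub_dotProduct, dotProduct_smul, smul_dotProduct,
        smul_eq_mul]
      rw [ht]
      ring
    refine ⟨w, ?_, ?_⟩
    · intro i
      induction i using Fin.lastCases with
      | last =>
        rw [← hα, hw]
        simp only [dotProduct_sub, dotProduct_smul, smul_eq_mul, ← ht]
        field_simp
        simp
      | cast i =>
        have := hz i
        rw [← hswap] at this
        simpa [ha'] using this
    · rw [hswap]; exact hcz

/-- Homogeneous Farkas lemma, positive form. -/
lemma farkas_cone {p : ℕ} {m : Type} [Fintype m] (a : Fin p → (m → ℝ)) (c : m → ℝ)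
    (h : ∀ x : m → ℝ, (∀ i, a i ⬝ᵥ x ≤ 0) → c ⬝ᵥ x ≤ 0) :
    ∃ y : Fin p → ℝ, (∀ i, 0 ≤ y i) ∧ ∑ i, y i • a i = c := by
  by_contra hc
  obtain ⟨x, hx, hcx⟩ := farkas_aux p a c hc
  exact absurd (h x hx) (not_le.2 hcx)


/-- Affine form of Farkas' lemma: if `{x | A x ≤ b}` is nonempty, then `E x ≤ F` holds for
all `x` with `A x ≤ b` iff there is an entrywise nonnegative matrix `P` with `P A = E` and
`P b ≤ F` (all inequalities entrywise). -/
theorem affine_farkas {p n q : ℕ}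
    (A : Matrix (Fin p) (Fin n) ℝ) (b : Fin p → ℝ)
    (E : Matrix (Fin q) (Fin n) ℝ) (F : Fin q → ℝ)
    (hne : ∃ x : Fin n → ℝ, A.mulVec x ≤ b) :
    (∀ x : Fin n → ℝ, A.mulVec x ≤ b → E.mulVec x ≤ F) ↔
      (∃ P : Matrix (Fin q) (Fin p) ℝ,
        (∀ i j, 0 ≤ P i j) ∧ P * A = E ∧ P.mulVec b ≤ F) := by

  constructor
  · intro hEF
    have key : ∀ j : Fin q, ∃ y : Fin p → ℝ, (∀ i, 0 ≤ y i) ∧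
        (∀ k, ∑ i, y i * A i k = E j k) ∧ ∑ i, y i * b i ≤ F j := by
      intro j
      set a : Fin (p + 1) → (Fin n ⊕ Unit) → ℝ :=
        Fin.snoc (fun i => Sum.elim (A i) (fun _ => -b i)) (Sum.elim 0 (fun _ => (-1 : ℝ)))
        with ha
      set c : (Fin n ⊕ Unit) → ℝ := Sum.elim (E j) (fun _ => -F j) with hc
      have hyp : ∀ v : (Fin n ⊕ Unit) → ℝ, (∀ i, a i ⬝ᵥ v ≤ 0) → c ⬝ᵥ v ≤ 0 := by
        intro v hv
        set x : Fin n → ℝ := fun k => v (Sum.inl k) with hx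
        set t : ℝ := v (Sum.inr ()) with htdef
        have ht : 0 ≤ t := by
          have := hv (Fin.last p)
          simp only [ha, Fin.snoc_last, dotProduct, Fintype.sum_sum_type, Sum.elim_inl,
            Sum.elim_inr, Pi.zero_apply, zero_mul, Finset.sum_const_zero, zero_add,
            Fintype.sum_unique, neg_one_mul] at this
          linarith
        have hAx : ∀ i : Fin p, A i ⬝ᵥ x ≤ t * b i := by
          intro i
          have := hv i.castSucc
          simp only [ha, Fin.snoc_castSucc, dotProduct, Fintype.sum_sum_type, Sum.elim_inl,
            Sum.elim_inr, Fintype.sum_unique] at this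
          simp only [dotProduct, hx]
          nlinarith [this]
        show (Sum.elim (E j) (fun _ => -F j)) ⬝ᵥ v ≤ 0
        have hcv : c ⬝ᵥ v = E j ⬝ᵥ x - F j * t := by
          simp [hc, dotProduct, Fintype.sum_sum_type, Fintype.sum_unique, hx, htdef]
          ring
        rw [← hc, hcv]
        rcases eq_or_lt_of_le ht with ht0 | htpos
        · -- t = 0 : A x ≤ 0, use nonemptiness
          obtain ⟨x₀, hx₀⟩ := hne
          have hAx0 : ∀ i, A i ⬝ᵥ x ≤ 0 := fun i => by
            have := hAx i; rw [← ht0] at this; linarith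
          have hray : ∀ s : ℝ, 0 ≤ s → E j ⬝ᵥ (x₀ + s • x) ≤ F j := by
            intro s hs
            have hfeas : A.mulVec (x₀ + s • x) ≤ b := by
              intro i
              have : A.mulVec (x₀ + s • x) i = A.mulVec x₀ i + s * (A i ⬝ᵥ x) := by
                simp [Matrix.mulVec, dotProduct, Finset.mul_sum, Finset.sum_add_distrib]
                ring_nf
                rw [← Finset.sum_add_distrib]
                exact Finset.sum_congr rfl fun k _ => by ring
              rw [this]
              have := hx₀ i
              nlinarith [mul_nonpos_of_nonneg_of_nonpos hs (hAx0 i)]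
            have := hEF _ hfeas j
            simpa [Matrix.mulVec] using this
          have hE0 : E j ⬝ᵥ x ≤ 0 := by
            by_contra hpos
            push_neg at hpos
            have h0 := hray 0 le_rfl
            simp at h0
            set s := (F j - E j ⬝ᵥ x₀ + 1) / (E j ⬝ᵥ x) with hs
            have hs0 : 0 ≤ s := div_nonneg (by linarith) hpos.le
            have := hray s hs0
            have hdist : E j ⬝ᵥ (x₀ + s • x) = E j ⬝ᵥ x₀ + s * (E j ⬝ᵥ x) := by
              simp [dotProduct, Finset.mul_sum, Finset.sum_add_distrib]
              rw [← Finset.sum_add_distrib]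
              exact Finset.sum_congr rfl fun k _ => by ring
            rw [hdist, hs] at this
            rw [div_mul_cancel₀ _ (ne_of_gt hpos)] at this
            linarith
          rw [← ht0]
          linarith
        · -- t > 0 : scale
          have hfeas : A.mulVec (t⁻¹ • x) ≤ b := by
            intro i
            have : A.mulVec (t⁻¹ • x) i = t⁻¹ * (A i ⬝ᵥ x) := by
              simp [Matrix.mulVec, dotProduct, Finset.mul_sum]
              exact Finset.sum_congr rfl fun k _ => by ring
            rw [this]
            have := hAx i
            rw [inv_mul_le_iff₀ htpos]
            linarith
          have := hEF _ hfeas j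
          have hmv : E.mulVec (t⁻¹ • x) j = t⁻¹ * (E j ⬝ᵥ x) := by
            simp [Matrix.mulVec, dotProduct, Finset.mul_sum]
            exact Finset.sum_congr rfl fun k _ => by ring
          rw [hmv] at this
          have h2 : E j ⬝ᵥ x ≤ t * F j := by
            have h3 := mul_le_mul_of_nonneg_left this htpos.le
            rwa [mul_inv_cancel_left₀ (ne_of_gt htpos)] at h3
          linarith [h2]
      obtain ⟨y, hy, hsum⟩ := farkas_cone a c hyp
      refine ⟨fun i => y i.castSucc, fun i => hy _, ?_, ?_⟩
      · intro k
        have := congrFun hsum (Sum.inl k)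
        rw [Fin.sum_univ_castSucc] at this
        simpa [ha, hc, Finset.sum_apply] using this
      · have := congrFun hsum (Sum.inr ())
        rw [Fin.sum_univ_castSucc] at this
        simp [ha, hc, Finset.sum_apply] at this
        have hylast := hy (Fin.last p)
        -- this : -(∑ i, y i.castSucc * b i) - y (Fin.last p) = -F j  (roughly)
        nlinarith [this]
    choose P hP1 hP2 hP3 using key
    refine ⟨Matrix.of P, fun j i => hP1 j i, ?_, ?_⟩
    · ext j k
      simpa [Matrix.mul_apply] using hP2 j k
    · intro j
      simpa [Matrix.mulVec, dotProduct] using hP3 j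
  · rintro ⟨P, hP, hPA, hPb⟩ x hx j
    have h1 : E.mulVec x j = P.mulVec (A.mulVec x) j := by
      rw [← hPA, ← Matrix.mulVec_mulVec]
    rw [h1]
    calc P.mulVec (A.mulVec x) j = ∑ i, P j i * A.mulVec x i := rfl
      _ ≤ ∑ i, P j i * b i :=
        Finset.sum_le_sum fun i _ => mul_le_mul_of_nonneg_left (hx i) (hP j i)
      _ = P.mulVec b j := rfl
      _ ≤ F j := hPb j
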